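/- Let φ_j : ℝⁿ → ℝ, j = 1,…,N, be differentiable functions and set φ(x) = (1/N)·Σ_{j=1}^N φ_j(x). Assume φ is L-smooth and that the Strong Growth Condition holds with constant ρ > 0, i.e., (1/N)·Σ_{j=1}^N ‖∇φ_j(x)‖² ≤ ρ·‖∇φ(x)‖² for all x ∈ ℝⁿ. Let η = 1/(ρ·L). Then for every x ∈ ℝⁿ, the expected value of the objective after one stochastic gradient step with uniformly sampled index satisfies (1/N)·Σ_{j=1}^N φ(x − η·∇φ_j(x)) ≤ φ(x) − ‖∇φ(x)‖²/(2·ρ·L). -/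

import Mathlib

open RealInnerProductSpace
open intervalIntegral in
lemma descent {n : ℕ} {Φ : EuclideanSpace ℝ (Fin n) → ℝ} {L : ℝ} (hL : 0 ≤ L)
    (hΦ : Differentiable ℝ Φ)
    (hLip : ∀ x y, ‖gradient Φ x - gradient Φ y‖ ≤ L * ‖x - y‖)
    (x v : EuclideanSpace ℝ (Fin n)) :
    Φ (x + v) ≤ Φ x + ⟪gradient Φ x, v⟫ + L / 2 * ‖v‖ ^ 2 := by
  have hgcont : Continuous (gradient Φ) := by
    apply LipschitzWith.continuous (K := L.toNNReal)
    apply LipschitzWith.of_dist_le_mul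
    intro a b
    simpa [dist_eq_norm, Real.coe_toNNReal _ hL] using hLip a b
  have hg : ∀ t : ℝ, HasDerivAt (fun t : ℝ => Φ (x + t • v))
      (⟪gradient Φ (x + t • v), v⟫) t := by
    intro t
    have hc : HasDerivAt (fun t : ℝ => x + t • v) v t := by
      simpa using ((hasDerivAt_id t).smul_const v).const_add x
    have := ((hΦ (x + t • v)).hasGradientAt.hasFDerivAt).comp_hasDerivAt t hc
    simpa [Function.comp_def] using this
  have hcont : Continuous fun t : ℝ => ⟪gradient Φ (x + t • v), v⟫ := by
    apply Continuous.inner (hgcont.comp (by fun_prop)) continuous_const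
  have key : Φ (x + v) - Φ x = ∫ t in (0:ℝ)..1, ⟪gradient Φ (x + t • v), v⟫ := by
    have := integral_eq_sub_of_hasDerivAt (f := fun t : ℝ => Φ (x + t • v))
      (a := 0) (b := 1) (fun t _ => hg t) (hcont.intervalIntegrable 0 1)
    simpa using this.symm
  have hmono : ∫ t in (0:ℝ)..1, ⟪gradient Φ (x + t • v), v⟫ ≤
      ∫ t in (0:ℝ)..1, (⟪gradient Φ x, v⟫ + L * t * ‖v‖ ^ 2) := by
    apply integral_mono_on zero_le_one (hcont.intervalIntegrable 0 1)
      ((by fun_prop : Continuous fun t : ℝ => ⟪gradient Φ x, v⟫ + L * t * ‖v‖ ^ 2).intervalIntegrable 0 1)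
    intro t ht
    have ht0 : 0 ≤ t := ht.1
    have h1 : ⟪gradient Φ (x + t • v), v⟫ - ⟪gradient Φ x, v⟫
        = ⟪gradient Φ (x + t • v) - gradient Φ x, v⟫ := by
      rw [inner_sub_left]
    have h2 : ⟪gradient Φ (x + t • v) - gradient Φ x, v⟫ ≤ L * t * ‖v‖ ^ 2 := by
      calc ⟪gradient Φ (x + t • v) - gradient Φ x, v⟫
          ≤ ‖gradient Φ (x + t • v) - gradient Φ x‖ * ‖v‖ := real_inner_le_norm _ _
        _ ≤ (L * ‖(x + t • v) - x‖) * ‖v‖ := by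
            apply mul_le_mul_of_nonneg_right (hLip _ _) (norm_nonneg _)
        _ = L * t * ‖v‖ ^ 2 := by
            rw [add_sub_cancel_left, norm_smul]
            simp [abs_of_nonneg ht0]; ring
    linarith
  have hval : ∫ t in (0:ℝ)..1, (⟪gradient Φ x, v⟫ + L * t * ‖v‖ ^ 2)
      = ⟪gradient Φ x, v⟫ + L / 2 * ‖v‖ ^ 2 := by
    rw [integral_add (intervalIntegrable_const)
      ((by fun_prop : Continuous fun t : ℝ => L * t * ‖v‖ ^ 2).intervalIntegrable 0 1)]
    simp only [integral_const]
    have : ∫ t in (0:ℝ)..1, L * t * ‖v‖ ^ 2 = L / 2 * ‖v‖ ^ 2 := by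
      have : (fun t : ℝ => L * t * ‖v‖ ^ 2) = fun t : ℝ => (L * ‖v‖ ^ 2) * t := by
        ext t; ring
      rw [this, integral_const_mul, integral_id]
      ring
    rw [this]; simp [smul_eq_mul]
  linarith [key, hmono, hval.le, hval.ge]

theorem stmt4 {n N : ℕ} (φ : Fin N → EuclideanSpace ℝ (Fin n) → ℝ)
    (hφj : ∀ j, Differentiable ℝ (φ j))
    (Φ : EuclideanSpace ℝ (Fin n) → ℝ)
    (hΦ : Φ = fun x => (1 / N : ℝ) * ∑ j, φ j x)
    (L : ℝ) (hL : 0 < L) (hΦsmooth : ContDiff ℝ 1 Φ)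
    (hΦLip : ∀ x y, ‖gradient Φ x - gradient Φ y‖ ≤ L * ‖x - y‖)
    (ρ : ℝ) (hρ : 0 < ρ)
    (hSGC : ∀ x, (1 / N : ℝ) * ∑ j, ‖gradient (φ j) x‖ ^ 2 ≤ ρ * ‖gradient Φ x‖ ^ 2)
    (η : ℝ) (hη : η = 1 / (ρ * L)) :
    ∀ x, (1 / N : ℝ) * ∑ j, Φ (x - η • gradient (φ j) x) ≤
      Φ x - ‖gradient Φ x‖ ^ 2 / (2 * ρ * L) := by
  intro x
  rcases Nat.eq_zero_or_pos N with hN | hN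
  · subst hN hΦ
    simp [gradient_const]
  have hN0 : (0:ℝ) < N := by exact_mod_cast hN
  have hdiffΦ : Differentiable ℝ Φ := hΦsmooth.differentiable one_ne_zero
  set G := gradient Φ x with hG
  set g : Fin N → EuclideanSpace ℝ (Fin n) := fun j => gradient (φ j) x with hgdef
  -- gradient of Φ as average of gradients
  have hgrad : G = (1/N : ℝ) • ∑ j, g j := by
    rw [hG, gradient, hΦ]
    have hds : DifferentiableAt ℝ (fun y => ∑ j, φ j y) x := by
      apply DifferentiableAt.fun_sum; intro j _; exact (hφj j).differentiableAt
    rw [fderiv_const_mul hds, fderiv_fun_sum (fun j _ => (hφj j).differentiableAt)]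
    rw [map_smul, map_sum]
    rfl
  have hstep : ∀ j, Φ (x - η • g j) ≤
      Φ x - η * ⟪G, g j⟫ + L/2 * (η^2 * ‖g j‖^2) := by
    intro j
    have hd := descent hL.le hdiffΦ hΦLip x (-(η • g j))
    have e1 : x + -(η • g j) = x - η • g j := (sub_eq_add_neg _ _).symm
    rw [e1] at hd
    have e2 : ⟪G, -(η • g j)⟫ = -(η * ⟪G, g j⟫) := by
      rw [inner_neg_right, real_inner_smul_right]
    have e3 : ‖-(η • g j)‖^2 = η^2 * ‖g j‖^2 := by
      rw [norm_neg, norm_smul, mul_pow, Real.norm_eq_abs, sq_abs]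
    rw [e2, e3] at hd
    linarith
  have hsum : (1/N : ℝ) * ∑ j, Φ (x - η • g j) ≤
      (1/N : ℝ) * ∑ j, (Φ x - η * ⟪G, g j⟫ + L/2 * (η^2 * ‖g j‖^2)) := by
    apply mul_le_mul_of_nonneg_left (Finset.sum_le_sum fun j _ => hstep j) (by positivity)
  have hinner : (1/N : ℝ) * ∑ j, ⟪G, g j⟫ = ‖G‖^2 := by
    rw [← inner_sum, ← real_inner_smul_right, ← hgrad, real_inner_self_eq_norm_sq]
  have hexpand : (1/N : ℝ) * ∑ j, (Φ x - η * ⟪G, g j⟫ + L/2 * (η^2 * ‖g j‖^2))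
      = Φ x - η * ((1/N : ℝ) * ∑ j, ⟪G, g j⟫)
        + L/2 * η^2 * ((1/N : ℝ) * ∑ j, ‖g j‖^2) := by
    rw [Finset.sum_add_distrib, Finset.sum_sub_distrib]
    simp only [Finset.sum_const, Finset.card_univ, Fintype.card_fin, nsmul_eq_mul,
      ← Finset.mul_sum]
    field_simp
  have hLη : (0:ℝ) ≤ L/2 * η^2 := by positivity
  have hSGCx := hSGC x
  have hfinal : Φ x - η * ‖G‖^2 + L/2 * η^2 * (ρ * ‖G‖^2)
      = Φ x - ‖G‖^2 / (2 * ρ * L) := by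
    rw [hη]
    field_simp
    ring
  calc (1/N : ℝ) * ∑ j, Φ (x - η • g j)
      ≤ Φ x - η * ((1/N : ℝ) * ∑ j, ⟪G, g j⟫)
        + L/2 * η^2 * ((1/N : ℝ) * ∑ j, ‖g j‖^2) := by rw [← hexpand]; exact hsum
    _ ≤ Φ x - η * ‖G‖^2 + L/2 * η^2 * (ρ * ‖G‖^2) := by
        rw [hinner]
        have := mul_le_mul_of_nonneg_left hSGCx hLη
        linarith
    _ = Φ x - ‖G‖^2 / (2 * ρ * L) := hfinal
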